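/- For all real x with 0 < x < π/2, one has (3 − x²/10)·sin(x)/(2 + cos(x) + x²/10) < x. -/

import Mathlib

theorem trig_frame_lower (x : ℝ) (hx0 : 0 < x) (hx : x < Real.pi / 2) :
    (3 - x^2/10) * Real.sin x / (2 + Real.cos x + x^2/10) < x := by
  set t := x / 2 with ht
  have ht0 : 0 < t := by positivity
  have ht1 : t < 1 := by
    have : Real.pi < 4 := by linarith [Real.pi_lt_d2]
    simp only [ht]; linarith
  have hs : Real.sin x = 2 * Real.sin t * Real.cos t := by
    rw [ht, ← Real.sin_two_mul]; ring_nf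
  have hc : Real.cos x = 2 * Real.cos t ^ 2 - 1 := by
    rw [ht, ← Real.cos_two_mul]; ring_nf
  have hsle : Real.sin t < t := Real.sin_lt ht0
  have hslb : t - t ^ 3 / 4 < Real.sin t := by have := Real.sin_gt_sub_cube ht0; linarith [pow_pos ht0 3]
  have hclb : 1 - t ^ 2 / 2 < Real.cos t := Real.one_sub_sq_div_two_lt_cos ht0.ne'
  have hcub : Real.cos t ≤ 1 := Real.cos_le_one t
  have hspos : 0 < Real.sin t := Real.sin_pos_of_pos_of_lt_pi ht0 (by nlinarith [Real.pi_gt_three])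
  have hcpos : 0 < Real.cos t := by nlinarith
  have hx2 : x = 2 * t := by rw [ht]; ring
  have hden : 0 < 2 + Real.cos x + x ^ 2 / 10 := by nlinarith [Real.neg_one_le_cos x]
  rw [div_lt_iff₀ hden]
  rw [hs, hc, hx2]
  have h1 : (t - Real.sin t) * Real.cos t ≥ 0 :=
    mul_nonneg (by linarith) hcpos.le
  have h2 : t * (t ^ 2 / 2 - (1 - Real.cos t)) ≥ 0 :=
    mul_nonneg ht0.le (by linarith)
  have h3 : t * ((1 - Real.cos t) * (2 - 2 * Real.cos t)) ≥ 0 :=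
    mul_nonneg ht0.le (mul_nonneg (by linarith) (by linarith))
  have h4 : t ^ 2 * ((Real.sin t - (t - t ^ 3 / 4)) * Real.cos t) ≥ 0 :=
    mul_nonneg (sq_nonneg t) (mul_nonneg (by linarith) hcpos.le)
  have h5 : t ^ 2 * ((t - t ^ 3 / 4) * (Real.cos t - (1 - t ^ 2 / 2))) ≥ 0 :=
    mul_nonneg (sq_nonneg t) (mul_nonneg (by nlinarith) (by linarith))
  have h6 : t ^ 3 * (1 - t ^ 2) ≥ 0 :=
    mul_nonneg (by positivity) (by nlinarith)
  nlinarith [h1, h2, h3, h4, h5, h6, mul_pos ht0 ht0, mul_pos (mul_pos ht0 ht0) ht0]
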